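/- With L as above, for λ ∈ dom(L) and y ∈ ℝ^d, the recession function L0⁺(y) := lim_{α→∞} (L(λ+αy) − L(λ))/α satisfies: L0⁺(y) = +∞ if yᵀcy > 0 or F({x : yᵀx < 0}) > 0, and L0⁺(y) = −yᵀb + ∫_{yᵀx>0} yᵀh(x) F(dx) otherwise (i.e., when cy = 0 and F({yᵀx < 0}) = 0). -/

import Mathlib

open MeasureTheory Filter
open scoped RealInnerProductSpace ENNReal

lemma aux_linear_nonneg {A B : ℝ} (h : ∀ t : ℝ, 0 ≤ A + t * B) : B = 0 := by
  by_contra hB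
  have := h (-(A + 1) / B)
  rw [div_mul_cancel₀ _ hB] at this
  linarith

lemma ereal_top_sub {a : EReal} (h : a ≠ ⊤) : (⊤ : EReal) - a = ⊤ := by
  induction a with
  | bot => exact EReal.top_sub_bot
  | coe a => exact EReal.top_sub_coe a
  | top => exact absurd rfl h

lemma coe_ennreal_fin {x : ℝ≥0∞} (h : x ≠ ⊤) : (x : EReal) = ((x.toReal : ℝ) : EReal) := by
  conv_lhs => rw [← ENNReal.ofReal_toReal h]
  rw [EReal.coe_ennreal_ofReal]
  exact congrArg _ (max_eq_left ENNReal.toReal_nonneg)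

lemma aux_logq_anti {s t a b : ℝ} (hs : 0 < 1 + s) (ht : 0 ≤ t) (ha : 0 < a) (hab : a ≤ b) :
    a * (Real.log (1 + s + b * t) - Real.log (1 + s)) ≤
      b * (Real.log (1 + s + a * t) - Real.log (1 + s)) := by
  have hb : 0 < b := lt_of_lt_of_le ha hab
  have h1 : (1 : ℝ) - a / b + a / b = 1 := by ring
  have hw1 : 0 ≤ 1 - a / b := by
    have : a / b ≤ 1 := (div_le_one hb).2 hab
    linarith
  have hw2 : 0 ≤ a / b := le_of_lt (div_pos ha hb)
  have hcc := strictConcaveOn_log_Ioi.concaveOn.2 (x := 1 + s) (y := 1 + s + b * t)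
    (Set.mem_Ioi.2 hs) (Set.mem_Ioi.2 (by nlinarith)) hw1 hw2 h1
  have harg : (1 - a / b) • (1 + s) + (a / b) • (1 + s + b * t) = 1 + s + a * t := by
    field_simp
    simp only [smul_eq_mul]
    field_simp
    ring
  rw [harg] at hcc
  simp only [smul_eq_mul] at hcc
  have h2 : b * ((1 - a / b) * Real.log (1 + s) + a / b * Real.log (1 + s + b * t)) =
      (b - a) * Real.log (1 + s) + a * Real.log (1 + s + b * t) := by
    field_simp
  have h3 := mul_le_mul_of_nonneg_left hcc (le_of_lt hb)
  rw [h2] at h3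
  nlinarith [h3]


lemma aux_logq_tendsto {s t : ℝ} (hs : 0 < 1 + s) (ht : 0 ≤ t) :
    Tendsto (fun α : ℝ => (Real.log (1 + s + α * t) - Real.log (1 + s)) / α)
      Filter.atTop (nhds 0) := by
  have h2 : Tendsto (fun α : ℝ => Real.log (1 + s) / α) atTop (nhds 0) :=
    tendsto_const_nhds.div_atTop tendsto_id
  rcases eq_or_lt_of_le ht with ht0 | ht0
  · have : (fun α : ℝ => (Real.log (1 + s + α * t) - Real.log (1 + s)) / α) = fun _ => 0 := by
      funext α; rw [← ht0]; simp
    rw [this]; exact tendsto_const_nhds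
  · have h1 : Tendsto (fun α : ℝ => Real.log (1 + s + α * t) / α) atTop (nhds 0) := by
      have haff : Tendsto (fun α : ℝ => 1 + s + α * t) atTop atTop :=
        tendsto_atTop_add_const_left _ _ (Tendsto.atTop_mul_const ht0 tendsto_id)
      have hcomp := (Real.tendsto_pow_log_div_mul_add_atTop (1 / t) (-((1 + s) / t)) 1
        (by positivity)).comp haff
      refine hcomp.congr fun α => ?_
      have htne : t ≠ 0 := ne_of_gt ht0
      simp only [Function.comp_apply, pow_one]
      congr 1
      field_simp
      ring
    have := h1.sub h2
    simpa [sub_div] using this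

lemma ennreal_tendsto_of_monotone {f : ℝ → ℝ≥0∞} {J : ℝ≥0∞}
    (hm : ∀ ⦃a b : ℝ⦄, 1 ≤ a → a ≤ b → f a ≤ f b)
    (hs : Tendsto (fun n : ℕ => f ((n : ℝ) + 1)) atTop (nhds J)) :
    Tendsto f atTop (nhds J) := by
  have hmono : Monotone fun n : ℕ => f ((n : ℝ) + 1) := by
    intro n m hnm
    exact hm (by simp) (by
      have : (n : ℝ) ≤ (m : ℝ) := Nat.cast_le.2 hnm
      linarith)
  have hle : ∀ n : ℕ, f ((n : ℝ) + 1) ≤ J := fun n => Monotone.ge_of_tendsto hmono hs n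
  rw [tendsto_order]
  constructor
  · intro l hl
    obtain ⟨n, hn⟩ := (hs.eventually (eventually_gt_nhds hl)).exists
    filter_upwards [eventually_ge_atTop ((n : ℝ) + 1)] with α hα
    exact lt_of_lt_of_le hn (hm (by simp) hα)
  · intro u hu
    filter_upwards [eventually_ge_atTop (1 : ℝ)] with α hα
    obtain ⟨n, hn⟩ := exists_nat_ge α
    calc f α ≤ f ((n : ℝ) + 1) := hm hα (by linarith)
      _ ≤ J := hle n
      _ < u := hu

lemma ennreal_tendsto_of_antitone {f : ℝ → ℝ≥0∞}
    (hm : ∀ ⦃a b : ℝ⦄, 1 ≤ a → a ≤ b → f b ≤ f a)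
    (hs : Tendsto (fun n : ℕ => f ((n : ℝ) + 1)) atTop (nhds 0)) :
    Tendsto f atTop (nhds 0) := by
  rw [ENNReal.tendsto_nhds_zero]
  intro ε hε
  obtain ⟨n, hn⟩ := (hs.eventually (eventually_le_nhds hε)).exists
  filter_upwards [eventually_ge_atTop ((n : ℝ) + 1)] with α hα
  exact le_trans (hm (by simp) hα) hn

lemma integrable_of_parts {X : Type*} [MeasurableSpace X] {μ : MeasureTheory.Measure X}
    {f : X → ℝ} (hm : Measurable f)
    (hp : (∫⁻ x, ENNReal.ofReal (f x) ∂μ) ≠ ⊤)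
    (hn : (∫⁻ x, ENNReal.ofReal (-(f x)) ∂μ) ≠ ⊤) : Integrable f μ := by
  refine ⟨hm.aestronglyMeasurable, ?_⟩
  rw [hasFiniteIntegral_iff_norm]
  have hb : ∀ x, ENNReal.ofReal ‖f x‖ ≤ ENNReal.ofReal (f x) + ENNReal.ofReal (-(f x)) := by
    intro x
    rcases le_total 0 (f x) with h | h
    · rw [Real.norm_of_nonneg h]; exact le_self_add
    · rw [Real.norm_of_nonpos h]; exact le_add_self
  refine lt_of_le_of_lt (lintegral_mono hb) ?_
  rw [lintegral_add_left hm.ennreal_ofReal]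
  exact ENNReal.add_lt_top.2 ⟨hp.lt_top, hn.lt_top⟩


set_option maxHeartbeats 2000000 in
theorem stmt_13 (d : ℕ)
    (b : EuclideanSpace ℝ (Fin d))
    (c : EuclideanSpace ℝ (Fin d) →L[ℝ] EuclideanSpace ℝ (Fin d))
    (hcsym : ∀ x y, ⟪c x, y⟫ = ⟪x, c y⟫) (hcpos : ∀ x, 0 ≤ ⟪x, c x⟫)
    (F : Measure (EuclideanSpace ℝ (Fin d))) [SigmaFinite F]
    (hF0 : F {0} = 0)
    (hF1 : ∫⁻ x, ENNReal.ofReal (min (‖x‖ ^ 2) 1) ∂F < ⊤)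
    (hF2 : ∫⁻ x in {x | 1 < ‖x‖}, ENNReal.ofReal ‖x‖ ∂F < ⊤)
    (g : EuclideanSpace ℝ (Fin d) → EuclideanSpace ℝ (Fin d) → ℝ)
    (hg : ∀ lam x, g lam x =
      (if ‖x‖ ≤ 1 then ⟪lam, x⟫ else 0) - Real.log (1 + ⟪lam, x⟫))
    (L : EuclideanSpace ℝ (Fin d) → EReal)
    (hL : ∀ lam, L lam =
      if F {x | 1 + ⟪lam, x⟫ ≤ 0} = 0 then
        ((-⟪lam, b⟫ + (1/2) * ⟪lam, c lam⟫ : ℝ) : EReal)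
          + ((∫⁻ x, ENNReal.ofReal (g lam x) ∂F : ℝ≥0∞) : EReal)
          - ((∫⁻ x, ENNReal.ofReal (-(g lam x)) ∂F : ℝ≥0∞) : EReal)
      else (⊤ : EReal)) :
    ∀ lam, L lam ≠ (⊤ : EReal) → ∀ y : EuclideanSpace ℝ (Fin d),
      Filter.Tendsto (fun α : ℝ => (L (lam + α • y) - L lam) / ((α : ℝ) : EReal))
        Filter.atTop
        (nhds (if 0 < ⟪y, c y⟫ ∨ F {x | ⟪y, x⟫ < 0} ≠ 0 then (⊤ : EReal)
          else ((-⟪y, b⟫ : ℝ) : EReal) +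
            ((∫⁻ x in {x | 0 < ⟪y, x⟫},
              ENNReal.ofReal (if ‖x‖ ≤ 1 then ⟪y, x⟫ else 0) ∂F : ℝ≥0∞) : EReal))) := by
  classical
  intro lam hlam y
  -- basic measurability
  have hinner : ∀ v : (EuclideanSpace ℝ (Fin d)), Measurable (fun x : (EuclideanSpace ℝ (Fin d)) => ⟪v, x⟫) := fun v =>
    (continuous_const.inner continuous_id).measurable
  have hmg : ∀ μ : (EuclideanSpace ℝ (Fin d)), Measurable (g μ) := by
    intro μ
    have : g μ = fun x => (if ‖x‖ ≤ 1 then ⟪μ, x⟫ else 0) - Real.log (1 + ⟪μ, x⟫) :=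
      funext (hg μ)
    rw [this]
    exact (Measurable.ite (measurableSet_le measurable_norm measurable_const)
      (hinner μ) measurable_const).sub
      (Real.measurable_log.comp (measurable_const.add (hinner μ)))
  have hdom : F {x | 1 + ⟪lam, x⟫ ≤ 0} = 0 := by
    by_contra h
    rw [hL lam, if_neg h] at hlam
    exact hlam rfl
  -- a.e. positivity of 1 + ⟪μ, x⟫ given the domain condition
  have haepos : ∀ μ : (EuclideanSpace ℝ (Fin d)), F {x | 1 + ⟪μ, x⟫ ≤ 0} = 0 → ∀ᵐ x ∂F, 0 < 1 + ⟪μ, x⟫ := by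
    intro μ hμ
    have : ∀ᵐ x ∂F, ¬ (1 + ⟪μ, x⟫ ≤ 0) := by
      rw [ae_iff]
      simpa using hμ
    filter_upwards [this] with x hx
    exact not_le.1 hx
  -- the negative-part integral is always finite on the domain
  have hIneg : ∀ μ : (EuclideanSpace ℝ (Fin d)), F {x | 1 + ⟪μ, x⟫ ≤ 0} = 0 →
      (∫⁻ x, ENNReal.ofReal (-(g μ x)) ∂F) ≤
        ENNReal.ofReal ‖μ‖ * ∫⁻ x in {x : (EuclideanSpace ℝ (Fin d)) | 1 < ‖x‖}, ENNReal.ofReal ‖x‖ ∂F := by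
    intro μ hμ
    have hset : MeasurableSet {x : (EuclideanSpace ℝ (Fin d)) | 1 < ‖x‖} :=
      measurableSet_lt measurable_const measurable_norm
    have step1 : (∫⁻ x, ENNReal.ofReal (-(g μ x)) ∂F) ≤
        ∫⁻ x, Set.indicator {x : (EuclideanSpace ℝ (Fin d)) | 1 < ‖x‖}
          (fun x => ENNReal.ofReal (‖μ‖ * ‖x‖)) x ∂F := by
      refine lintegral_mono_ae ?_
      filter_upwards [haepos μ hμ] with x hx
      rw [hg]
      by_cases h1 : ‖x‖ ≤ 1
      · have hnm : x ∉ {x : (EuclideanSpace ℝ (Fin d)) | 1 < ‖x‖} := by simpa using h1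
        rw [Set.indicator_of_notMem hnm, if_pos h1]
        rw [ENNReal.ofReal_eq_zero.2]
        have := Real.log_le_sub_one_of_pos hx
        linarith
      · have hm : x ∈ {x : (EuclideanSpace ℝ (Fin d)) | 1 < ‖x‖} := by simpa using not_le.1 h1
        rw [Set.indicator_of_mem hm, if_neg h1]
        apply ENNReal.ofReal_le_ofReal
        have h2 : Real.log (1 + ⟪μ, x⟫) ≤ ⟪μ, x⟫ := by
          have := Real.log_le_sub_one_of_pos hx
          linarith
        have h3 : ⟪μ, x⟫ ≤ ‖μ‖ * ‖x‖ := real_inner_le_norm μ x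
        linarith
    calc (∫⁻ x, ENNReal.ofReal (-(g μ x)) ∂F)
        ≤ _ := step1
      _ = ∫⁻ x in {x : (EuclideanSpace ℝ (Fin d)) | 1 < ‖x‖}, ENNReal.ofReal (‖μ‖ * ‖x‖) ∂F := by
          rw [lintegral_indicator hset]
      _ = ∫⁻ x in {x : (EuclideanSpace ℝ (Fin d)) | 1 < ‖x‖}, ENNReal.ofReal ‖μ‖ * ENNReal.ofReal ‖x‖ ∂F := by
          congr 1
          funext x
          rw [ENNReal.ofReal_mul (norm_nonneg μ)]
      _ = ENNReal.ofReal ‖μ‖ * ∫⁻ x in {x : (EuclideanSpace ℝ (Fin d)) | 1 < ‖x‖}, ENNReal.ofReal ‖x‖ ∂F := by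
          rw [lintegral_const_mul _ (measurable_norm.ennreal_ofReal)]
  have hInegTop : ∀ μ : (EuclideanSpace ℝ (Fin d)), F {x | 1 + ⟪μ, x⟫ ≤ 0} = 0 →
      (∫⁻ x, ENNReal.ofReal (-(g μ x)) ∂F) ≠ ⊤ := by
    intro μ hμ
    exact ne_top_of_le_ne_top
      (ENNReal.mul_ne_top ENNReal.ofReal_ne_top hF2.ne) (hIneg μ hμ)
  have hIpos0 : (∫⁻ x, ENNReal.ofReal (g lam x) ∂F) ≠ ⊤ := by
    by_contra h
    rw [hL lam, if_pos hdom, h] at hlam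
    apply hlam
    rw [EReal.coe_ennreal_top]
    rw [show ((-⟪lam, b⟫ + (1/2) * ⟪lam, c lam⟫ : ℝ) : EReal) + ⊤ = ⊤ from
      EReal.coe_add_top _]
    exact ereal_top_sub (by
      rw [EReal.coe_ennreal_eq_top_iff.ne]
      exact hInegTop lam hdom)
  set r0 : ℝ := (-⟪lam, b⟫ + (1/2) * ⟪lam, c lam⟫)
      + ((∫⁻ x, ENNReal.ofReal (g lam x) ∂F).toReal
        - (∫⁻ x, ENNReal.ofReal (-(g lam x)) ∂F).toReal) with hr0_def
  have hr0 : L lam = ((r0 : ℝ) : EReal) := by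
    rw [hL lam, if_pos hdom, coe_ennreal_fin hIpos0, coe_ennreal_fin (hInegTop lam hdom)]
    rw [hr0_def]
    norm_cast
    ring
  by_cases hFy : F {x | ⟪y, x⟫ < 0} = 0
  · by_cases hq : 0 < ⟪y, c y⟫
    · -- Case 2: quadratic growth
      rw [if_pos (Or.inl hq)]
      rw [EReal.tendsto_nhds_top_iff_real]
      intro M
      set Q : ℝ := ⟪y, c y⟫ with hQ
      set C2r : ℝ := (∫⁻ x in {x : EuclideanSpace ℝ (Fin d) | 1 < ‖x‖},
        ENNReal.ofReal ‖x‖ ∂F).toReal with hC2r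
      have hC2nn : 0 ≤ C2r := ENNReal.toReal_nonneg
      have key : ∀ α : ℝ, 1 ≤ α →
          (((-⟪lam + α • y, b⟫ + (1/2) * ⟪lam + α • y, c (lam + α • y)⟫
             - (‖lam‖ + α * ‖y‖) * C2r - r0) / α : ℝ) : EReal)
            ≤ (L (lam + α • y) - L lam) / ((α : ℝ) : EReal) := by
        intro α hα1
        have hα0 : (0:ℝ) < α := by linarith
        by_cases hd : F {x | 1 + ⟪lam + α • y, x⟫ ≤ 0} = 0
        · rw [hL _, if_pos hd, hr0]
          set aα : ℝ := -⟪lam + α • y, b⟫ + (1/2) * ⟪lam + α • y, c (lam + α • y)⟫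
            with haα
          set Ip := ∫⁻ x, ENNReal.ofReal (g (lam + α • y) x) ∂F with hIp
          set In := ∫⁻ x, ENNReal.ofReal (-(g (lam + α • y) x)) ∂F with hIn
          have hInle : In ≤ ENNReal.ofReal ((‖lam‖ + α * ‖y‖) * C2r) := by
            calc In ≤ ENNReal.ofReal ‖lam + α • y‖ *
                (∫⁻ x in {x : EuclideanSpace ℝ (Fin d) | 1 < ‖x‖},
                  ENNReal.ofReal ‖x‖ ∂F) := hIneg _ hd
              _ = ENNReal.ofReal ‖lam + α • y‖ * ENNReal.ofReal C2r := by
                  rw [hC2r, ENNReal.ofReal_toReal hF2.ne]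
              _ = ENNReal.ofReal (‖lam + α • y‖ * C2r) :=
                  (ENNReal.ofReal_mul (norm_nonneg _)).symm
              _ ≤ _ := by
                  apply ENNReal.ofReal_le_ofReal
                  apply mul_le_mul_of_nonneg_right _ hC2nn
                  calc ‖lam + α • y‖ ≤ ‖lam‖ + ‖α • y‖ := norm_add_le _ _
                    _ = ‖lam‖ + α * ‖y‖ := by
                        rw [norm_smul, Real.norm_of_nonneg hα0.le]
          have step1 : ((aα : ℝ) : EReal) - ((In : ℝ≥0∞) : EReal)
              ≤ (aα : EReal) + ((Ip : ℝ≥0∞) : EReal) - ((In : ℝ≥0∞) : EReal) := by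
            apply EReal.sub_le_sub _ le_rfl
            nth_rewrite 1 [← add_zero ((aα : ℝ) : EReal)]
            exact add_le_add le_rfl (EReal.coe_ennreal_nonneg Ip)
          have step2 : (((aα - (‖lam‖ + α * ‖y‖) * C2r : ℝ)) : EReal)
              ≤ ((aα : ℝ) : EReal) - ((In : ℝ≥0∞) : EReal) := by
            have h1 : ((In : ℝ≥0∞) : EReal)
                ≤ (((‖lam‖ + α * ‖y‖) * C2r : ℝ) : EReal) := by
              calc ((In : ℝ≥0∞) : EReal)
                  ≤ ((ENNReal.ofReal ((‖lam‖ + α * ‖y‖) * C2r) : ℝ≥0∞) : EReal) :=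
                    EReal.coe_ennreal_le_coe_ennreal_iff.2 hInle
                _ = _ := by
                    rw [EReal.coe_ennreal_ofReal]
                    exact congrArg _ (max_eq_left (by positivity))
            rw [EReal.coe_sub]
            exact EReal.sub_le_sub le_rfl h1
          have chain : (((aα - (‖lam‖ + α * ‖y‖) * C2r - r0 : ℝ)) : EReal)
              ≤ ((aα : ℝ) : EReal) + ((Ip : ℝ≥0∞) : EReal) - ((In : ℝ≥0∞) : EReal)
                - ((r0 : ℝ) : EReal) := by
            rw [EReal.coe_sub]
            exact EReal.sub_le_sub (step2.trans step1) le_rfl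
          calc (((aα - (‖lam‖ + α * ‖y‖) * C2r - r0) / α : ℝ) : EReal)
              = (((aα - (‖lam‖ + α * ‖y‖) * C2r - r0 : ℝ)) : EReal) / ((α : ℝ) : EReal) :=
                EReal.coe_div _ _
            _ ≤ _ := EReal.div_le_div_right_of_nonneg
                (EReal.coe_nonneg.2 hα0.le) chain
        · rw [hL _, if_neg hd, ereal_top_sub hlam,
            EReal.top_div_of_pos_ne_top (EReal.coe_pos.2 hα0) (EReal.coe_ne_top α)]
          exact le_top
      have hclam : ⟪y, c lam⟫ = ⟪lam, c y⟫ := by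
        rw [real_inner_comm]; exact hcsym lam y
      obtain ⟨B, hBdef⟩ : ∃ B : ℝ, B = -⟪y,b⟫ + ⟪lam, c y⟫ - ‖y‖ * C2r := ⟨_, rfl⟩
      obtain ⟨Cc, hCcdef⟩ : ∃ Cc : ℝ,
        Cc = -⟪lam,b⟫ + (1/2)*⟪lam, c lam⟫ - ‖lam‖ * C2r - r0 := ⟨_, rfl⟩
      filter_upwards [Filter.eventually_ge_atTop
        (max 1 ((2/Q) * (|M| + |B| + |Cc| + 1)))] with α hα
      have hα1 : (1:ℝ) ≤ α := le_trans (le_max_left _ _) hα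
      have hα0 : (0:ℝ) < α := by linarith
      refine lt_of_lt_of_le ?_ (key α hα1)
      rw [EReal.coe_lt_coe_iff]
      have he : -⟪lam + α • y, b⟫ + (1/2) * ⟪lam + α • y, c (lam + α • y)⟫
            - (‖lam‖ + α * ‖y‖) * C2r - r0
          = (Q/2) * α^2 + B * α + Cc := by
        rw [hBdef, hCcdef]
        have hcadd : c (lam + α • y) = c lam + α • (c y) := by
          rw [map_add, ContinuousLinearMap.map_smul]
        simp only [inner_add_left, real_inner_smul_left, hcadd,
          inner_add_right, real_inner_smul_right, hclam, hQ]
        ring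
      rw [lt_div_iff₀ hα0, he]
      have hQα : (|M| + |B| + |Cc| + 1) ≤ (Q/2) * α := by
        have h2 : (2/Q) * (|M| + |B| + |Cc| + 1) ≤ α := le_trans (le_max_right _ _) hα
        have h3 := mul_le_mul_of_nonneg_left h2 (le_of_lt (by positivity : (0:ℝ) < Q/2))
        calc (|M| + |B| + |Cc| + 1)
            = (Q/2) * ((2/Q)*(|M| + |B| + |Cc| + 1)) := by field_simp
          _ ≤ (Q/2) * α := h3
      have p1 : 0 ≤ (|B| + B) * α := mul_nonneg (by linarith [neg_abs_le B]) hα0.le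
      have p2 : 0 ≤ (|M| - M) * α := mul_nonneg (by linarith [le_abs_self M]) hα0.le
      have p3 : |Cc| * 1 ≤ |Cc| * α := mul_le_mul_of_nonneg_left hα1 (abs_nonneg Cc)
      have p4 : (|M| + |B| + |Cc| + 1) * α ≤ ((Q/2) * α) * α :=
        mul_le_mul_of_nonneg_right hQα hα0.le
      nlinarith [p1, p2, p3, p4, neg_abs_le Cc, hα0]
    · -- Case 3: the finite/integral case
      have hQ0 : ⟪y, c y⟫ = 0 := le_antisymm (not_lt.1 hq) (hcpos y)
      have hcy : c y = 0 := by
        have hz : ∀ z : (EuclideanSpace ℝ (Fin d)), ⟪z, c y⟫ = 0 := by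
          intro z
          have h2 : ∀ t : ℝ, 0 ≤ ⟪z, c z⟫ + t * (2 * ⟪z, c y⟫) := by
            intro t
            have h3 := hcpos (z + t • y)
            have hcadd : c (z + t • y) = c z + t • (c y) := by
              rw [map_add, ContinuousLinearMap.map_smul]
            have hyz : ⟪y, c z⟫ = ⟪z, c y⟫ := by
              rw [real_inner_comm]; exact hcsym z y
            simp only [inner_add_left, real_inner_smul_left, hcadd,
              inner_add_right, real_inner_smul_right, hyz, hQ0] at h3
            nlinarith [h3]
          have := aux_linear_nonneg h2
          linarith
        exact inner_self_eq_zero.1 (hz (c y))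
      have haey : ∀ᵐ x ∂F, 0 ≤ ⟪y, x⟫ := by
        rw [ae_iff]
        simpa [not_le] using hFy
      have haelam := haepos lam hdom
      have hdomα : ∀ α : ℝ, 0 ≤ α → F {x | 1 + ⟪lam + α • y, x⟫ ≤ 0} = 0 := by
        intro α hα
        have h2 : ∀ᵐ x ∂F, ¬ (1 + ⟪lam + α • y, x⟫ ≤ 0) := by
          filter_upwards [haey, haelam] with x h1 h2
          rw [inner_add_left, real_inner_smul_left]
          intro hcon
          nlinarith [mul_nonneg hα h1]
        rw [ae_iff] at h2
        simpa using h2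
      obtain ⟨q, hqdef⟩ : ∃ q : ℝ → (EuclideanSpace ℝ (Fin d)) → ℝ,
          q = fun α x => (g (lam + α • y) x - g lam x) / α := ⟨_, rfl⟩
      have hinner_exp : ∀ (α : ℝ) (x : (EuclideanSpace ℝ (Fin d))),
          ⟪lam + α • y, x⟫ = ⟪lam, x⟫ + α * ⟪y, x⟫ := by
        intro α x; rw [inner_add_left, real_inner_smul_left]
      have hqform : ∀ (α : ℝ), α ≠ 0 → ∀ x : (EuclideanSpace ℝ (Fin d)),
          q α x = (if ‖x‖ ≤ 1 then ⟪y, x⟫ else 0)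
            - (Real.log (1 + ⟪lam, x⟫ + α * ⟪y, x⟫) - Real.log (1 + ⟪lam, x⟫)) / α := by
        intro α hα x
        rw [hqdef]
        simp only [hg, hinner_exp]
        have hassoc : (1 : ℝ) + (⟪lam, x⟫ + α * ⟪y, x⟫) = 1 + ⟪lam, x⟫ + α * ⟪y, x⟫ :=
          (add_assoc 1 _ _).symm
        rw [hassoc]
        by_cases h1 : ‖x‖ ≤ 1
        · rw [if_pos h1, if_pos h1, if_pos h1]; field_simp; ring
        · rw [if_neg h1, if_neg h1, if_neg h1]; field_simp; ring
      have hqmono : ∀ x : (EuclideanSpace ℝ (Fin d)), 0 ≤ ⟪y, x⟫ → 0 < 1 + ⟪lam, x⟫ →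
          ∀ a b₂ : ℝ, 1 ≤ a → a ≤ b₂ → q a x ≤ q b₂ x := by
        intro x ht hs a b2 ha hab
        have ha0 : (0:ℝ) < a := by linarith
        have hb0 : (0:ℝ) < b2 := by linarith
        rw [hqform a (ne_of_gt ha0) x, hqform b2 (ne_of_gt hb0) x]
        have hanti := aux_logq_anti hs ht ha0 hab
        have hdiv : (Real.log (1 + ⟪lam, x⟫ + b2 * ⟪y, x⟫) - Real.log (1 + ⟪lam, x⟫)) / b2
            ≤ (Real.log (1 + ⟪lam, x⟫ + a * ⟪y, x⟫) - Real.log (1 + ⟪lam, x⟫)) / a := by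
          rw [div_le_div_iff₀ hb0 ha0]
          nlinarith [hanti]
        linarith
      have hqtend : ∀ x : (EuclideanSpace ℝ (Fin d)), 0 ≤ ⟪y, x⟫ → 0 < 1 + ⟪lam, x⟫ →
          Filter.Tendsto (fun α => q α x) Filter.atTop
            (nhds ((if ‖x‖ ≤ 1 then ⟪y, x⟫ else 0))) := by
        intro x ht hs
        have h1 := aux_logq_tendsto (s := ⟪lam, x⟫) (t := ⟪y, x⟫) hs ht
        have h2 := (tendsto_const_nhds (x := (if ‖x‖ ≤ 1 then ⟪y, x⟫ else 0))
          (f := Filter.atTop (α := ℝ))).sub h1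
        rw [sub_zero] at h2
        apply h2.congr'
        filter_upwards [Filter.eventually_gt_atTop 0] with α hα
        exact (hqform α (ne_of_gt hα) x).symm
      have hqmeas : ∀ α : ℝ, Measurable (q α) := by
        intro α; rw [hqdef]; exact ((hmg _).sub (hmg _)).div_const α
      have hJeq : (∫⁻ x, ENNReal.ofReal (if ‖x‖ ≤ 1 then ⟪y, x⟫ else 0) ∂F)
          = ∫⁻ x in {x : (EuclideanSpace ℝ (Fin d)) | 0 < ⟪y, x⟫},
              ENNReal.ofReal (if ‖x‖ ≤ 1 then ⟪y, x⟫ else 0) ∂F := by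
        rw [← lintegral_indicator (measurableSet_lt measurable_const (hinner y))]
        apply lintegral_congr_ae
        filter_upwards [haey] with x ht
        by_cases h0 : (0:ℝ) < ⟪y, x⟫
        · have hmem : x ∈ {a : EuclideanSpace ℝ (Fin d) | 0 < ⟪y, a⟫} := h0
          rw [Set.indicator_of_mem hmem]
        · have ht0 : ⟪y, x⟫ = 0 := le_antisymm (not_lt.1 h0) ht
          have hnmem : x ∉ {a : EuclideanSpace ℝ (Fin d) | 0 < ⟪y, a⟫} := h0
          rw [Set.indicator_of_notMem hnmem]
          simp [ht0]
      have hNbound : ∀ α : ℝ, 1 ≤ α →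
          (∫⁻ x, ENNReal.ofReal (-(q α x)) ∂F)
            ≤ ENNReal.ofReal α⁻¹ * ((∫⁻ x, ENNReal.ofReal (g lam x) ∂F)
              + (∫⁻ x, ENNReal.ofReal (-(g (lam + α • y) x)) ∂F)) := by
        intro α hα1
        have hα0 : (0:ℝ) < α := by linarith
        have hpt : ∀ x, ENNReal.ofReal (-(q α x))
            ≤ ENNReal.ofReal α⁻¹ * (ENNReal.ofReal (g lam x)
              + ENNReal.ofReal (-(g (lam + α • y) x))) := by
          intro x
          have hrw : -(q α x) = α⁻¹ * (g lam x + -(g (lam + α • y) x)) := by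
            rw [hqdef]; field_simp; ring
          rw [hrw, ENNReal.ofReal_mul (by positivity)]
          exact mul_le_mul_right ENNReal.ofReal_add_le _
        calc (∫⁻ x, ENNReal.ofReal (-(q α x)) ∂F)
            ≤ ∫⁻ x, ENNReal.ofReal α⁻¹ * (ENNReal.ofReal (g lam x)
              + ENNReal.ofReal (-(g (lam + α • y) x))) ∂F := lintegral_mono hpt
          _ = _ := by
              rw [lintegral_const_mul (f := fun x =>
                  ENNReal.ofReal (g lam x) + ENNReal.ofReal (-(g (lam + α • y) x))) _
                (((hmg lam).ennreal_ofReal).add (((hmg _).neg).ennreal_ofReal)),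
                lintegral_add_left ((hmg lam).ennreal_ofReal)]
      have hNfin : ∀ α : ℝ, 1 ≤ α → (∫⁻ x, ENNReal.ofReal (-(q α x)) ∂F) ≠ ⊤ := by
        intro α hα1
        refine ne_top_of_le_ne_top ?_ (hNbound α hα1)
        exact ENNReal.mul_ne_top ENNReal.ofReal_ne_top
          (ENNReal.add_ne_top.2 ⟨hIpos0, hInegTop _ (hdomα α (by linarith))⟩)
      have hPbound : ∀ α : ℝ, 1 ≤ α →
          (∫⁻ x, ENNReal.ofReal (q α x) ∂F)
            ≤ ENNReal.ofReal α⁻¹ * ((∫⁻ x, ENNReal.ofReal (g (lam + α • y) x) ∂F)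
              + (∫⁻ x, ENNReal.ofReal (-(g lam x)) ∂F)) := by
        intro α hα1
        have hα0 : (0:ℝ) < α := by linarith
        have hpt : ∀ x, ENNReal.ofReal (q α x)
            ≤ ENNReal.ofReal α⁻¹ * (ENNReal.ofReal (g (lam + α • y) x)
              + ENNReal.ofReal (-(g lam x))) := by
          intro x
          have hrw : q α x = α⁻¹ * (g (lam + α • y) x + -(g lam x)) := by
            rw [hqdef]; field_simp; ring
          rw [hrw, ENNReal.ofReal_mul (by positivity)]
          exact mul_le_mul_right ENNReal.ofReal_add_le _
        calc (∫⁻ x, ENNReal.ofReal (q α x) ∂F)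
            ≤ ∫⁻ x, ENNReal.ofReal α⁻¹ * (ENNReal.ofReal (g (lam + α • y) x)
              + ENNReal.ofReal (-(g lam x))) ∂F := lintegral_mono hpt
          _ = _ := by
              rw [lintegral_const_mul (f := fun x =>
                  ENNReal.ofReal (g (lam + α • y) x) + ENNReal.ofReal (-(g lam x))) _
                (((hmg _).ennreal_ofReal).add (((hmg lam).neg).ennreal_ofReal)),
                lintegral_add_left ((hmg _).ennreal_ofReal)]
      have hkey : ∀ α : ℝ, 1 ≤ α →
          (L (lam + α • y) - L lam) / ((α : ℝ) : EReal)
            = ((-⟪y, b⟫ : ℝ) : EReal)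
              + ((∫⁻ x, ENNReal.ofReal (q α x) ∂F : ℝ≥0∞) : EReal)
              - ((∫⁻ x, ENNReal.ofReal (-(q α x)) ∂F : ℝ≥0∞) : EReal) := by
        intro α hα1
        have hα0 : (0:ℝ) < α := by linarith
        have hdα := hdomα α (by linarith)
        have hInα := hInegTop _ hdα
        have ha : (-⟪lam + α • y, b⟫ + (1/2) * ⟪lam + α • y, c (lam + α • y)⟫ : ℝ)
            = (-⟪lam, b⟫ + (1/2) * ⟪lam, c lam⟫) - α * ⟪y, b⟫ := by
          have hcadd : c (lam + α • y) = c lam := by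
            rw [map_add, ContinuousLinearMap.map_smul, hcy, smul_zero, add_zero]
          have hyclam : ⟪y, c lam⟫ = 0 := by
            rw [real_inner_comm, hcsym lam y, hcy, inner_zero_right]
          simp only [inner_add_left, real_inner_smul_left, hcadd, hyclam]
          ring
        rw [hL _, if_pos hdα, ha, hr0]
        by_cases hIp : (∫⁻ x, ENNReal.ofReal (g (lam + α • y) x) ∂F) = ⊤
        · have hPtop : (∫⁻ x, ENNReal.ofReal (q α x) ∂F) = ⊤ := by
            by_contra hP
            have hpt : ∀ x, ENNReal.ofReal (g (lam + α • y) x)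
                ≤ ENNReal.ofReal α * ENNReal.ofReal (q α x)
                  + ENNReal.ofReal (g lam x) := by
              intro x
              have hxeq : g (lam + α • y) x = α * q α x + g lam x := by
                rw [hqdef]; field_simp; ring
              rw [hxeq, ← ENNReal.ofReal_mul hα0.le]
              exact ENNReal.ofReal_add_le
            have hle : (∫⁻ x, ENNReal.ofReal (g (lam + α • y) x) ∂F)
                ≤ ENNReal.ofReal α * (∫⁻ x, ENNReal.ofReal (q α x) ∂F)
                  + (∫⁻ x, ENNReal.ofReal (g lam x) ∂F) := by
              calc (∫⁻ x, ENNReal.ofReal (g (lam + α • y) x) ∂F)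
                  ≤ ∫⁻ x, (ENNReal.ofReal α * ENNReal.ofReal (q α x)
                    + ENNReal.ofReal (g lam x)) ∂F := lintegral_mono hpt
                _ = _ := by
                    rw [lintegral_add_left (((hqmeas α).ennreal_ofReal).const_mul _),
                      lintegral_const_mul _ ((hqmeas α).ennreal_ofReal)]
            rw [hIp] at hle
            exact (ENNReal.add_ne_top.2
              ⟨ENNReal.mul_ne_top ENNReal.ofReal_ne_top hP, hIpos0⟩) (top_le_iff.1 hle)
          rw [hIp, hPtop, EReal.coe_ennreal_top, EReal.coe_add_top,
            ereal_top_sub (mt EReal.coe_ennreal_eq_top_iff.1 hInα), EReal.top_sub_coe,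
            EReal.top_div_of_pos_ne_top (EReal.coe_pos.2 hα0) (EReal.coe_ne_top α),
            EReal.coe_add_top,
            ereal_top_sub (mt EReal.coe_ennreal_eq_top_iff.1 (hNfin α hα1))]
        · have hPfin : (∫⁻ x, ENNReal.ofReal (q α x) ∂F) ≠ ⊤ := by
            refine ne_top_of_le_ne_top ?_ (hPbound α hα1)
            exact ENNReal.mul_ne_top ENNReal.ofReal_ne_top
              (ENNReal.add_ne_top.2 ⟨hIp, hInegTop lam hdom⟩)
          have hint1 : Integrable (g (lam + α • y)) F :=
            integrable_of_parts (hmg _) hIp hInα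
          have hint0 : Integrable (g lam) F :=
            integrable_of_parts (hmg lam) hIpos0 (hInegTop lam hdom)
          have hintq : Integrable (q α) F := by
            rw [hqdef]
            exact (hint1.sub hint0).div_const α
          have e1 := integral_eq_lintegral_pos_part_sub_lintegral_neg_part hint1
          have e0 := integral_eq_lintegral_pos_part_sub_lintegral_neg_part hint0
          have eq2 := integral_eq_lintegral_pos_part_sub_lintegral_neg_part hintq
          have eInt2 : α * (∫ x, q α x ∂F)
              = (∫ x, g (lam + α • y) x ∂F) - ∫ x, g lam x ∂F := by
            have : ∫ x, q α x ∂F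
                = ((∫ x, g (lam + α • y) x ∂F) - ∫ x, g lam x ∂F) / α := by
              rw [hqdef, ← integral_sub hint1 hint0, ← integral_div]
            rw [this]
            field_simp
          rw [coe_ennreal_fin hIp, coe_ennreal_fin hInα, coe_ennreal_fin hPfin,
            coe_ennreal_fin (hNfin α hα1), ← EReal.coe_add, ← EReal.coe_sub,
            ← EReal.coe_sub, ← EReal.coe_div, ← EReal.coe_add, ← EReal.coe_sub,
            EReal.coe_eq_coe_iff, div_eq_iff (ne_of_gt hα0)]
          linear_combination (-1 : ℝ) * e1 + e0 - hr0_def + α * eq2 - eInt2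
      -- monotone convergence for the positive part
      have haeP : ∀ ⦃a b2 : ℝ⦄, 1 ≤ a → a ≤ b2 →
          (∫⁻ x, ENNReal.ofReal (q a x) ∂F) ≤ ∫⁻ x, ENNReal.ofReal (q b2 x) ∂F := by
        intro a b2 ha hab
        refine lintegral_mono_ae ?_
        filter_upwards [haey, haelam] with x h1 h2
        exact ENNReal.ofReal_le_ofReal (hqmono x h1 h2 a b2 ha hab)
      have hseqP : Filter.Tendsto
          (fun n : ℕ => ∫⁻ x, ENNReal.ofReal (q ((n : ℝ) + 1) x) ∂F)
          Filter.atTop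
          (nhds (∫⁻ x, ENNReal.ofReal (if ‖x‖ ≤ 1 then ⟪y, x⟫ else 0) ∂F)) := by
        refine lintegral_tendsto_of_tendsto_of_monotone
          (fun n => ((hqmeas _).ennreal_ofReal).aemeasurable) ?_ ?_
        · filter_upwards [haey, haelam] with x h1 h2
          intro n m hnm
          exact ENNReal.ofReal_le_ofReal (hqmono x h1 h2 _ _ (by simp)
            (by have := (Nat.cast_le (α := ℝ)).2 hnm; linarith))
        · filter_upwards [haey, haelam] with x h1 h2
          have hnat : Filter.Tendsto (fun n : ℕ => ((n : ℝ) + 1))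
              Filter.atTop Filter.atTop :=
            Filter.tendsto_atTop_add_const_right _ _ tendsto_natCast_atTop_atTop
          exact (ENNReal.continuous_ofReal.tendsto _).comp ((hqtend x h1 h2).comp hnat)
      have hPlim : Filter.Tendsto (fun α : ℝ => ∫⁻ x, ENNReal.ofReal (q α x) ∂F)
          Filter.atTop (nhds (∫⁻ x in {x : EuclideanSpace ℝ (Fin d) | 0 < ⟪y, x⟫},
            ENNReal.ofReal (if ‖x‖ ≤ 1 then ⟪y, x⟫ else 0) ∂F)) := by
        rw [← hJeq]
        exact ennreal_tendsto_of_monotone haeP hseqP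
      -- antitone convergence for the negative part
      have haeN : ∀ ⦃a b2 : ℝ⦄, 1 ≤ a → a ≤ b2 →
          (∫⁻ x, ENNReal.ofReal (-(q b2 x)) ∂F)
            ≤ ∫⁻ x, ENNReal.ofReal (-(q a x)) ∂F := by
        intro a b2 ha hab
        refine lintegral_mono_ae ?_
        filter_upwards [haey, haelam] with x h1 h2
        exact ENNReal.ofReal_le_ofReal (neg_le_neg (hqmono x h1 h2 a b2 ha hab))
      have hzero : (∫⁻ x, ENNReal.ofReal (-(if ‖x‖ ≤ 1 then ⟪y, x⟫ else 0)) ∂F) = 0 := by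
        have hz : ∀ᵐ x ∂F, ENNReal.ofReal (-(if ‖x‖ ≤ 1 then ⟪y, x⟫ else 0))
            = (0 : ℝ≥0∞) := by
          filter_upwards [haey] with x h1
          apply ENNReal.ofReal_eq_zero.2
          by_cases hx1 : ‖x‖ ≤ 1
          · rw [if_pos hx1]; linarith
          · rw [if_neg hx1]; simp
        rw [lintegral_congr_ae hz, lintegral_zero]
      have hseqN : Filter.Tendsto
          (fun n : ℕ => ∫⁻ x, ENNReal.ofReal (-(q ((n : ℝ) + 1) x)) ∂F)
          Filter.atTop (nhds 0) := by
        have h0 : (∫⁻ x, ENNReal.ofReal (-(q (((0:ℕ) : ℝ) + 1) x)) ∂F) ≠ ⊤ := by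
          simp only [Nat.cast_zero, zero_add]
          exact hNfin 1 le_rfl
        have hres := lintegral_tendsto_of_tendsto_of_antitone
          (f := fun (n : ℕ) x => ENNReal.ofReal (-(q ((n : ℝ) + 1) x)))
          (F := fun x => ENNReal.ofReal (-(if ‖x‖ ≤ 1 then ⟪y, x⟫ else 0)))
          (fun n => (((hqmeas _).neg).ennreal_ofReal).aemeasurable) ?_ h0 ?_
        · rw [hzero] at hres
          exact hres
        · filter_upwards [haey, haelam] with x h1 h2
          intro n m hnm
          exact ENNReal.ofReal_le_ofReal (neg_le_neg (hqmono x h1 h2 _ _ (by simp)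
            (by have := (Nat.cast_le (α := ℝ)).2 hnm; linarith)))
        · filter_upwards [haey, haelam] with x h1 h2
          have hnat : Filter.Tendsto (fun n : ℕ => ((n : ℝ) + 1))
              Filter.atTop Filter.atTop :=
            Filter.tendsto_atTop_add_const_right _ _ tendsto_natCast_atTop_atTop
          exact (ENNReal.continuous_ofReal.tendsto _).comp
            (((hqtend x h1 h2).comp hnat).neg)
      have hNlim : Filter.Tendsto (fun α : ℝ => ∫⁻ x, ENNReal.ofReal (-(q α x)) ∂F)
          Filter.atTop (nhds 0) :=
        ennreal_tendsto_of_antitone haeN hseqN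
      -- assembly
      rw [if_neg (not_or.2 ⟨hq, not_not_intro hFy⟩)]
      have hev : (fun α : ℝ => ((-⟪y, b⟫ : ℝ) : EReal)
            + ((∫⁻ x, ENNReal.ofReal (q α x) ∂F : ℝ≥0∞) : EReal)
            - ((∫⁻ x, ENNReal.ofReal (-(q α x)) ∂F : ℝ≥0∞) : EReal))
          =ᶠ[Filter.atTop] (fun α : ℝ => (L (lam + α • y) - L lam) / ((α : ℝ) : EReal)) := by
        filter_upwards [Filter.eventually_ge_atTop (1:ℝ)] with α hα
        exact (hkey α hα).symm
      refine Filter.Tendsto.congr' hev ?_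
      have t1 : Filter.Tendsto
          (fun α : ℝ => ((∫⁻ x, ENNReal.ofReal (q α x) ∂F : ℝ≥0∞) : EReal))
          Filter.atTop
          (nhds (((∫⁻ x in {x : EuclideanSpace ℝ (Fin d) | 0 < ⟪y, x⟫},
            ENNReal.ofReal (if ‖x‖ ≤ 1 then ⟪y, x⟫ else 0) ∂F : ℝ≥0∞) : EReal))) :=
        EReal.tendsto_coe_ennreal.2 hPlim
      have hc1 : ContinuousAt (fun p : EReal × EReal => p.1 + p.2)
          (((-⟪y, b⟫ : ℝ) : EReal), ((∫⁻ x in {x : EuclideanSpace ℝ (Fin d) | 0 < ⟪y, x⟫},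
            ENNReal.ofReal (if ‖x‖ ≤ 1 then ⟪y, x⟫ else 0) ∂F : ℝ≥0∞) : EReal)) :=
        EReal.continuousAt_add (Or.inl (by simp)) (Or.inl (by simp))
      have t2 := hc1.tendsto.comp (tendsto_const_nhds.prodMk_nhds t1)
      have t3 : Filter.Tendsto
          (fun α : ℝ => -((∫⁻ x, ENNReal.ofReal (-(q α x)) ∂F : ℝ≥0∞) : EReal))
          Filter.atTop (nhds (0 : EReal)) := by
        have := (EReal.tendsto_coe_ennreal.2 hNlim).neg
        simpa using this
      have hc2 : ContinuousAt (fun p : EReal × EReal => p.1 + p.2)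
          ((((-⟪y, b⟫ : ℝ) : EReal) + ((∫⁻ x in {x : EuclideanSpace ℝ (Fin d) | 0 < ⟪y, x⟫},
            ENNReal.ofReal (if ‖x‖ ≤ 1 then ⟪y, x⟫ else 0) ∂F : ℝ≥0∞) : EReal)),
            (0 : EReal)) :=
        EReal.continuousAt_add (Or.inr (by simp)) (Or.inr (by simp))
      have final := hc2.tendsto.comp (t2.prodMk_nhds t3)
      simp only [Function.comp_def, add_zero] at final
      have hfun : ∀ α : ℝ, (((-⟪y, b⟫ : ℝ) : EReal)
            + ((∫⁻ x, ENNReal.ofReal (q α x) ∂F : ℝ≥0∞) : EReal))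
            + -((∫⁻ x, ENNReal.ofReal (-(q α x)) ∂F : ℝ≥0∞) : EReal)
          = ((-⟪y, b⟫ : ℝ) : EReal)
            + ((∫⁻ x, ENNReal.ofReal (q α x) ∂F : ℝ≥0∞) : EReal)
            - ((∫⁻ x, ENNReal.ofReal (-(q α x)) ∂F : ℝ≥0∞) : EReal) := by
        intro α
        rw [sub_eq_add_neg]
      refine final.congr fun α => hfun α
  · -- Case 1: eventually infinite
    rw [if_pos (Or.inr hFy)]
    set A : ℕ → Set (EuclideanSpace ℝ (Fin d)) := fun n =>
      {x | ⟪y, x⟫ < 0 ∧ 1 + ⟪lam, x⟫ + (n : ℝ) * ⟪y, x⟫ ≤ 0} with hA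
    have hU : {x : EuclideanSpace ℝ (Fin d) | ⟪y, x⟫ < 0} ⊆ ⋃ n, A n := by
      intro x hx
      have hx' : ⟪y, x⟫ < 0 := hx
      obtain ⟨n, hn⟩ := exists_nat_ge ((1 + ⟪lam, x⟫) / (-⟪y, x⟫))
      refine Set.mem_iUnion.2 ⟨n, hx', ?_⟩
      rw [div_le_iff₀ (by linarith)] at hn
      nlinarith
    obtain ⟨n, hn⟩ : ∃ n, F (A n) ≠ 0 := by
      by_contra h
      push_neg at h
      exact hFy (measure_mono_null hU (measure_iUnion_null h))
    have hev : ∀ᶠ α : ℝ in Filter.atTop,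
        (L (lam + α • y) - L lam) / ((α : ℝ) : EReal) = (⊤ : EReal) := by
      filter_upwards [Filter.eventually_ge_atTop (max (n : ℝ) 1)] with α hα
      have hα1 : (1 : ℝ) ≤ α := le_trans (le_max_right _ _) hα
      have hαn : (n : ℝ) ≤ α := le_trans (le_max_left _ _) hα
      have hne : F {x | 1 + ⟪lam + α • y, x⟫ ≤ 0} ≠ 0 := by
        intro h0
        apply hn
        refine measure_mono_null ?_ h0
        intro x hx
        obtain ⟨hx1, hx2⟩ := hx
        have hexp : 1 + ⟪lam + α • y, x⟫ = 1 + ⟪lam, x⟫ + α * ⟪y, x⟫ := by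
          rw [inner_add_left, real_inner_smul_left]; ring
        rw [Set.mem_setOf_eq, hexp]
        nlinarith
      rw [hL _, if_neg hne, ereal_top_sub hlam,
        EReal.top_div_of_pos_ne_top (EReal.coe_pos.2 (by linarith : (0:ℝ) < α))
          (EReal.coe_ne_top α)]
    exact (Filter.tendsto_congr' hev).2 tendsto_const_nhds
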